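/- (Entropy rounding.) Let n be a positive integer and 0 ≤ z ≤ n. Define y = ⌈z⌉ if z ≤ n/2 and y = ⌊z⌋ if z > n/2. Then n·H(y/n) ≥ n·H(z/n) - log 5, where H is the binary entropy function. -/

import Mathlib

open Finset Real

/-- The binary entropy function. -/
noncomputable def binH (p : ℝ) : ℝ := -(p * Real.log p) - (1 - p) * Real.log (1 - p)

/-- Gibbs / tangent-line inequality for binary entropy. -/
lemma binH_key (p q : ℝ) (hp0 : 0 ≤ p) (hp1 : p ≤ 1) (hq0 : 0 < q) (hq1 : q < 1) :
    binH p ≤ binH q + (p - q) * (Real.log (1 - q) - Real.log q) := by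
  have h1 : p * (Real.log q - Real.log p) ≤ q - p := by
    rcases hp0.eq_or_lt with h | h
    · simp [← h, hq0.le]
    · have hl := Real.log_le_sub_one_of_pos (div_pos hq0 h)
      rw [Real.log_div hq0.ne' h.ne'] at hl
      have h2 := mul_le_mul_of_nonneg_left hl h.le
      calc p * (Real.log q - Real.log p) ≤ p * (q / p - 1) := h2
        _ = q - p := by field_simp
  have h2 : (1 - p) * (Real.log (1 - q) - Real.log (1 - p)) ≤ p - q := by
    have hp' : 0 ≤ 1 - p := by linarith
    have hq' : 0 < 1 - q := by linarith
    rcases hp'.eq_or_lt with h | h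
    · rw [← h]; simp; linarith
    · have hl := Real.log_le_sub_one_of_pos (div_pos hq' h)
      rw [Real.log_div hq'.ne' h.ne'] at hl
      have h3 := mul_le_mul_of_nonneg_left hl h.le
      calc (1 - p) * (Real.log (1 - q) - Real.log (1 - p)) ≤ (1 - p) * ((1 - q) / (1 - p) - 1) := h3
        _ = p - q := by field_simp; ring
  unfold binH
  nlinarith [h1, h2]

lemma binH_le_log_two (p : ℝ) (hp0 : 0 ≤ p) (hp1 : p ≤ 1) : binH p ≤ Real.log 2 := by
  have h := binH_key p (1/2) hp0 hp1 (by norm_num) (by norm_num)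
  have : binH (1/2) = Real.log 2 := by
    unfold binH
    rw [show (1:ℝ) - 1/2 = 1/2 by norm_num, show (1:ℝ)/2 = 2⁻¹ by norm_num, Real.log_inv]
    ring
  rw [this] at h
  norm_num at h
  linarith [h]

set_option maxHeartbeats 1000000 in
/-- entropy rounding: rounding `z` to the integer `y = ⌈z⌉` if `z ≤ n/2`,
`y = ⌊z⌋` otherwise, loses at most `log 5` in `n·H(·/n)`. -/
theorem entropy_rounding (n : ℕ) (hn : 0 < n) (z : ℝ) (hz0 : 0 ≤ z) (hzn : z ≤ n) :
    (n : ℝ) * binH (z / n) - Real.log 5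
      ≤ (n : ℝ) * binH ((if z ≤ n / 2 then (⌈z⌉ : ℝ) else (⌊z⌋ : ℝ)) / n) := by
  have hn1 : (1:ℝ) ≤ n := by exact_mod_cast hn
  have hnpos : (0:ℝ) < n := by linarith
  have hlog5 : 0 ≤ Real.log 5 := Real.log_nonneg (by norm_num)
  have hlog25 : Real.log 2 ≤ Real.log 5 := by
    apply Real.log_le_log (by norm_num) (by norm_num)
  have hp0 : 0 ≤ z / n := by positivity
  have hp1 : z / n ≤ 1 := by rw [div_le_one hnpos]; exact hzn
  split_ifs with hc
  · -- z ≤ n/2, round up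
    have hzY : z ≤ (⌈z⌉ : ℝ) := Int.le_ceil z
    have hYz : ((⌈z⌉ : ℤ) : ℝ) < z + 1 := Int.ceil_lt_add_one z
    by_cases hA : ((⌈z⌉ : ℤ) : ℝ) ≤ n / 2
    · -- easy case: monotone on [0, 1/2]
      rcases hz0.eq_or_lt with h0 | h0
      · rw [← h0]
        norm_num
        linarith
      · have hY1 : (1:ℝ) ≤ (⌈z⌉ : ℤ) := by exact_mod_cast Int.ceil_pos.2 h0
        have hq0 : 0 < ((⌈z⌉:ℤ):ℝ) / n := by positivity
        have hq1 : ((⌈z⌉:ℤ):ℝ) / n < 1 := by rw [div_lt_one hnpos]; linarith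
        have hkey := binH_key (z/n) (((⌈z⌉:ℤ):ℝ)/n) hp0 hp1 hq0 hq1
        have hmono : Real.log (((⌈z⌉:ℤ):ℝ)/n) ≤ Real.log (1 - ((⌈z⌉:ℤ):ℝ)/n) := by
          apply Real.log_le_log hq0
          rw [le_sub_iff_add_le, ← add_div, div_le_one hnpos]
          linarith
        have hpq : z/n - ((⌈z⌉:ℤ):ℝ)/n ≤ 0 := by
          rw [div_sub_div_same]
          apply div_nonpos_of_nonpos_of_nonneg (by linarith) hnpos.le
        nlinarith [mul_nonpos_of_nonpos_of_nonneg hpq (by linarith : (0:ℝ) ≤ Real.log (1 - ((⌈z⌉:ℤ):ℝ)/n) - Real.log (((⌈z⌉:ℤ):ℝ)/n))]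
    · -- tricky case: n/2 < ⌈z⌉ < n/2 + 1
      push_neg at hA
      rcases eq_or_lt_of_le hn1 with h1 | h1
      · -- n = 1
        have hne : n = 1 := by exact_mod_cast h1.symm
        subst hne
        norm_num at hc hA hp1 ⊢
        have a1 : (0:ℤ) < ⌈z⌉ := by
          have : (0:ℝ) < ((⌈z⌉:ℤ):ℝ) := by linarith
          exact_mod_cast this
        have a2 : (⌈z⌉:ℤ) < 2 := by
          have : ((⌈z⌉:ℤ):ℝ) < 2 := by linarith
          exact_mod_cast this
        have hY1 : (⌈z⌉:ℤ) = 1 := by omega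
        rw [hY1]
        have hb1 : binH (((1:ℤ):ℝ)) = 0 := by norm_num [binH]
        rw [hb1]
        have := binH_le_log_two z hz0 hp1
        linarith
      · -- n ≥ 2, so 2⌈z⌉ = n + 1
        have hn2 : (2:ℝ) ≤ n := by
          have : (1:ℕ) < n := by exact_mod_cast h1
          exact_mod_cast this
        have e1 : (n:ℤ) < 2 * ⌈z⌉ := by exact_mod_cast (by push_cast; linarith : (n:ℝ) < 2 * ((⌈z⌉:ℤ):ℝ))
        have e2 : 2 * (⌈z⌉:ℤ) < n + 2 := by exact_mod_cast (by push_cast; linarith : 2 * ((⌈z⌉:ℤ):ℝ) < (n:ℝ) + 2)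
        have e3 : 2 * (⌈z⌉:ℤ) = n + 1 := by omega
        have e4 : (2:ℤ) ≤ ⌈z⌉ := by
          have : (2:ℕ) ≤ n := by exact_mod_cast hn2
          omega
        have e3R : 2 * ((⌈z⌉:ℤ):ℝ) = (n:ℝ) + 1 := by exact_mod_cast e3
        have e4R : (2:ℝ) ≤ ((⌈z⌉:ℤ):ℝ) := by exact_mod_cast e4
        set Y : ℝ := ((⌈z⌉:ℤ):ℝ) with hYdef
        have hq0 : 0 < Y / n := by positivity
        have hq1 : Y / n < 1 := by rw [div_lt_one hnpos]; linarith
        have hkey := binH_key (z/n) (Y/n) hp0 hp1 hq0 hq1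
        have hsub : 1 - Y/n = (Y - 1)/n := by field_simp; linarith
        have hlq : Real.log (Y/n) = Real.log Y - Real.log n := Real.log_div (by linarith) hnpos.ne'
        have hlq' : Real.log ((Y-1)/n) = Real.log (Y-1) - Real.log n := Real.log_div (by linarith) hnpos.ne'
        have hb : Real.log Y - Real.log (Y - 1) ≤ Real.log 5 := by
          have : Real.log Y ≤ Real.log (5 * (Y - 1)) := Real.log_le_log (by linarith) (by linarith)
          rw [Real.log_mul (by norm_num) (by linarith)] at this
          linarith
        have hD : 0 ≤ Real.log Y - Real.log (Y - 1) := by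
          have := Real.log_le_log (by linarith : (0:ℝ) < Y - 1) (by linarith : Y - 1 ≤ Y)
          linarith
        have hyz0 : 0 ≤ Y - z := by linarith
        have hyz1 : Y - z ≤ 1 := by linarith
        have hE : (n:ℝ) * ((z/n - Y/n) * (Real.log (1 - Y/n) - Real.log (Y/n))) ≤ Real.log 5 := by
          rw [hsub, hlq, hlq', div_sub_div_same]
          have expand : (n:ℝ) * ((z - Y)/n * (Real.log (Y-1) - Real.log n - (Real.log Y - Real.log n)))
              = (Y - z) * (Real.log Y - Real.log (Y-1)) := by
            field_simp
            ring
          rw [expand]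
          nlinarith
        have hmul := mul_le_mul_of_nonneg_left hkey hnpos.le
        nlinarith [hmul, hE]
  · -- z > n/2, round down
    push_neg at hc
    have hzY : ((⌊z⌋:ℤ):ℝ) ≤ z := Int.floor_le z
    have hYz : z < ((⌊z⌋:ℤ):ℝ) + 1 := Int.lt_floor_add_one z
    by_cases hA : (n:ℝ)/2 ≤ ((⌊z⌋:ℤ):ℝ)
    · -- easy case: antitone on [1/2, 1]
      by_cases hfz : ((⌊z⌋:ℤ):ℝ) = z
      · rw [hfz]; linarith
      · have hlt : ((⌊z⌋:ℤ):ℝ) < z := lt_of_le_of_ne hzY hfz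
        have hYn : ((⌊z⌋:ℤ):ℝ) < n := lt_of_lt_of_le hlt hzn
        have hY0 : (0:ℝ) < ((⌊z⌋:ℤ):ℝ) := by linarith
        have hq0 : 0 < ((⌊z⌋:ℤ):ℝ) / n := by positivity
        have hq1 : ((⌊z⌋:ℤ):ℝ) / n < 1 := by rw [div_lt_one hnpos]; exact hYn
        have hkey := binH_key (z/n) (((⌊z⌋:ℤ):ℝ)/n) hp0 hp1 hq0 hq1
        have hmono : Real.log (1 - ((⌊z⌋:ℤ):ℝ)/n) ≤ Real.log (((⌊z⌋:ℤ):ℝ)/n) := by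
          apply Real.log_le_log
          · rw [sub_pos]; exact hq1
          · have harg : ((n:ℝ) - ((⌊z⌋:ℤ):ℝ))/n ≤ ((⌊z⌋:ℤ):ℝ)/n := by
              exact (div_le_div_iff_of_pos_right hnpos).2 (by linarith)
            calc 1 - ((⌊z⌋:ℤ):ℝ)/n = ((n:ℝ) - ((⌊z⌋:ℤ):ℝ))/n := by field_simp
              _ ≤ ((⌊z⌋:ℤ):ℝ)/n := harg
        have hpq : 0 ≤ z/n - ((⌊z⌋:ℤ):ℝ)/n := by
          rw [div_sub_div_same]
          exact div_nonneg (by linarith) hnpos.le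
        nlinarith [mul_nonneg hpq (by linarith : (0:ℝ) ≤ Real.log (((⌊z⌋:ℤ):ℝ)/n) - Real.log (1 - ((⌊z⌋:ℤ):ℝ)/n))]
    · -- tricky: ⌊z⌋ < n/2 < z
      push_neg at hA
      rcases eq_or_lt_of_le hn1 with h1 | h1
      · -- n = 1
        have hne : n = 1 := by exact_mod_cast h1.symm
        subst hne
        norm_num at hc hA hp1 ⊢
        have a1 : (0:ℤ) ≤ ⌊z⌋ := Int.floor_nonneg.2 hz0
        have a2 : (⌊z⌋:ℤ) < 1 := by
          have : ((⌊z⌋:ℤ):ℝ) < 1 := by linarith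
          exact_mod_cast this
        have hY0 : (⌊z⌋:ℤ) = 0 := by omega
        rw [hY0]
        have hb1 : binH (((0:ℤ):ℝ)) = 0 := by norm_num [binH]
        rw [hb1]
        have := binH_le_log_two z hz0 hp1
        linarith
      · -- n ≥ 2, so n = 2⌊z⌋ + 1
        have hn2 : (2:ℝ) ≤ n := by
          have : (1:ℕ) < n := by exact_mod_cast h1
          exact_mod_cast this
        have e1 : 2 * (⌊z⌋:ℤ) < n := by exact_mod_cast (by push_cast; linarith : 2 * ((⌊z⌋:ℤ):ℝ) < (n:ℝ))
        have e2 : (n:ℤ) < 2 * ⌊z⌋ + 2 := by exact_mod_cast (by push_cast; linarith : (n:ℝ) < 2 * ((⌊z⌋:ℤ):ℝ) + 2)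
        have e3 : (n:ℤ) = 2 * ⌊z⌋ + 1 := by omega
        have e4 : (1:ℤ) ≤ ⌊z⌋ := by
          have : (2:ℕ) ≤ n := by exact_mod_cast hn2
          omega
        have e3R : (n:ℝ) = 2 * ((⌊z⌋:ℤ):ℝ) + 1 := by exact_mod_cast e3
        have e4R : (1:ℝ) ≤ ((⌊z⌋:ℤ):ℝ) := by exact_mod_cast e4
        set Y : ℝ := ((⌊z⌋:ℤ):ℝ) with hYdef
        have hq0 : 0 < Y / n := by positivity
        have hq1 : Y / n < 1 := by rw [div_lt_one hnpos]; linarith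
        have hkey := binH_key (z/n) (Y/n) hp0 hp1 hq0 hq1
        have hsub : 1 - Y/n = (Y + 1)/n := by field_simp; linarith
        have hlq : Real.log (Y/n) = Real.log Y - Real.log n := Real.log_div (by linarith) hnpos.ne'
        have hlq' : Real.log ((Y+1)/n) = Real.log (Y+1) - Real.log n := Real.log_div (by linarith) hnpos.ne'
        have hb : Real.log (Y+1) - Real.log Y ≤ Real.log 5 := by
          have : Real.log (Y+1) ≤ Real.log (5 * Y) := Real.log_le_log (by linarith) (by linarith)
          rw [Real.log_mul (by norm_num) (by linarith)] at this
          linarith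
        have hD : 0 ≤ Real.log (Y+1) - Real.log Y := by
          have := Real.log_le_log (by linarith : (0:ℝ) < Y) (by linarith : Y ≤ Y + 1)
          linarith
        have hyz0 : 0 ≤ z - Y := by linarith
        have hyz1 : z - Y ≤ 1 := by linarith
        have hE : (n:ℝ) * ((z/n - Y/n) * (Real.log (1 - Y/n) - Real.log (Y/n))) ≤ Real.log 5 := by
          rw [hsub, hlq, hlq', div_sub_div_same]
          have expand : (n:ℝ) * ((z - Y)/n * (Real.log (Y+1) - Real.log n - (Real.log Y - Real.log n)))
              = (z - Y) * (Real.log (Y+1) - Real.log Y) := by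
            field_simp; ring
          rw [expand]
          nlinarith
        nlinarith
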